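/- For the two fixed connected components of the network, the constants ã_L, b̃_L, c̃_L, and ã_j and K̃_j = b̃_j + c̃_j for 1 ≤ j ≤ L−1, can be identified from ṡ_L and s̈_L (i.e., the map k ↦ (ã_L, b̃_L, c̃_L, (ã_j)_{j<L}, (b̃_j+c̃_j)_{j<L}) is identifiable from the variable s_L with D = 2). -/

import Mathlib

open MvPolynomial Finsupp

variable {σ : Type*}

/-- The total (Lie) derivative of a polynomial `φ` associated to the polynomial vector
field `f`: `φ̇ = Σ_x (∂φ/∂x)·f x`. -/
noncomputable def lieD [Fintype σ] (f : σ → MvPolynomial σ ℝ)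
    (φ : MvPolynomial σ ℝ) : MvPolynomial σ ℝ :=
  ∑ x : σ, MvPolynomial.pderiv x φ * f x

/-- Iterated total (Lie) derivative. -/
noncomputable def lieDIter [Fintype σ] (f : σ → MvPolynomial σ ℝ) :
    ℕ → MvPolynomial σ ℝ → MvPolynomial σ ℝ
  | 0, φ => φ
  | n + 1, φ => lieD f (lieDIter f n φ)

/-- Indicator of a species inside a complex, as a real number. -/
def ind [DecidableEq σ] (a x : σ) : ℝ := if a = x then 1 else 0

/-- A chemical reaction network of the structural form of Assumption 1: the connected
components are indexed by `ι`; component `i` is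
`Y i + S i 0 ⇄ U i 1 → Y i + S i 1 ⇄ U i 2 → ⋯ ⇄ U i (L i) → Y i + S i (L i)`,
with rate constants `a_{i,j}, b_{i,j}, c_{i,j}` for the reactions
`Y i + S i (j-1) → U i j`, `U i j → Y i + S i (j-1)`, `U i j → Y i + S i j`
(`1 ≤ j ≤ L i`). Only the values `S i j` for `j ≤ L i` and `U i j` for
`1 ≤ j ≤ L i` are relevant. -/
structure A1Network (σ : Type*) where
  ι : Type
  [fintypeι : Fintype ι]
  L : ι → ℕ
  Lpos : ∀ i, 1 ≤ L i
  Y : ι → σ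
  S : ι → ℕ → σ
  U : ι → ℕ → σ

attribute [instance] A1Network.fintypeι

namespace A1Network

variable [Fintype σ] [DecidableEq σ]

/-- Rate-constant index: component `i`, block `j+1` (for `j : Fin (L i)`), and
`0, 1, 2` for the constants `a, b, c` of the block. -/
def Param (N : A1Network σ) : Type := (i : N.ι) × Fin (N.L i) × Fin 3

instance (N : A1Network σ) : Fintype N.Param :=
  inferInstanceAs (Fintype ((i : N.ι) × Fin (N.L i) × Fin 3))

/-- `x` is an intermediate species of the network. -/
def inter (N : A1Network σ) (x : σ) : Prop :=
  ∃ i, ∃ j : Fin (N.L i), x = N.U i ((j : ℕ) + 1)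

/-- The non-intermediate `x₁` reacts with the non-intermediate `x₂`
(a reaction `x₁ + x₂ → U` exists). -/
def reactsWith (N : A1Network σ) (x₁ x₂ : σ) : Prop :=
  ∃ i, ∃ j : Fin (N.L i),
    (x₁ = N.Y i ∧ x₂ = N.S i (j : ℕ)) ∨ (x₂ = N.Y i ∧ x₁ = N.S i (j : ℕ))

/-- The intermediate `u` reacts to the non-intermediate `x`
(a reaction `u → x + X₂` exists). -/
def reactsTo (N : A1Network σ) (u x : σ) : Prop :=
  ∃ i, ∃ j : Fin (N.L i), u = N.U i ((j : ℕ) + 1) ∧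
    (x = N.Y i ∨ x = N.S i (j : ℕ) ∨ x = N.S i ((j : ℕ) + 1))

/-- The distinctness/uniqueness requirements of Assumption 1: the intermediates of the
entire network are pairwise distinct and distinct from all non-intermediates; the
non-intermediates of one component are pairwise distinct; each complex lies in a
unique connected component. -/
structure Assumption1 (N : A1Network σ) : Prop where
  U_inj : ∀ i (j : Fin (N.L i)) i' (j' : Fin (N.L i')),
    N.U i ((j : ℕ) + 1) = N.U i' ((j' : ℕ) + 1) → i = i' ∧ (j : ℕ) = (j' : ℕ)
  U_ne_Y : ∀ i (j : Fin (N.L i)) i', N.U i ((j : ℕ) + 1) ≠ N.Y i'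
  U_ne_S : ∀ i (j : Fin (N.L i)) i' j', j' ≤ N.L i' → N.U i ((j : ℕ) + 1) ≠ N.S i' j'
  S_inj : ∀ i j j', j ≤ N.L i → j' ≤ N.L i → N.S i j = N.S i j' → j = j'
  complex_unique : ∀ i i' j j', j ≤ N.L i → j' ≤ N.L i' →
    (∀ x : σ, ind (N.Y i) x + ind (N.S i j) x = ind (N.Y i') x + ind (N.S i' j') x) →
    i = i'

/-- `part` is a partition of the species as in Assumption 2: intermediates form class `0`;
all the substrates and products of a component lie in one class `α ≥ 1` which contains
neither the enzyme of the component nor any intermediate. -/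
def IsPartition (N : A1Network σ) (part : σ → ℕ) : Prop :=
  (∀ x, N.inter x → part x = 0) ∧
  (∀ i : N.ι, ∃ α, 1 ≤ α ∧ (∀ j, j ≤ N.L i → part (N.S i j) = α) ∧
    part (N.Y i) ≠ α ∧ part (N.Y i) ≠ 0)

/-- Assumption 2: there exists a partition as above. -/
def Assumption2 (N : A1Network σ) : Prop := ∃ part, N.IsPartition part

/-- The mass-action right-hand side of the induced dynamical system:
`ẋ = Σ_{y→y'} k_{yy'} x^y (y'-y)`. -/
noncomputable def rhs (N : A1Network σ) (k : N.Param → ℝ) (x : σ) : MvPolynomial σ ℝ :=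
  ∑ i : N.ι, ∑ j : Fin (N.L i),
    (C (k ⟨i, j, 0⟩ *
          (ind (N.U i ((j : ℕ) + 1)) x - ind (N.Y i) x - ind (N.S i (j : ℕ)) x)) *
        (X (N.Y i) * X (N.S i (j : ℕ)))
      + C (k ⟨i, j, 1⟩ *
          (ind (N.Y i) x + ind (N.S i (j : ℕ)) x - ind (N.U i ((j : ℕ) + 1)) x)) *
        X (N.U i ((j : ℕ) + 1))
      + C (k ⟨i, j, 2⟩ *
          (ind (N.Y i) x + ind (N.S i ((j : ℕ) + 1)) x - ind (N.U i ((j : ℕ) + 1)) x)) *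
        X (N.U i ((j : ℕ) + 1)))

/-- `x^{(ℓ)}(x, k)`: the `ℓ`-th iterated total derivative of the variable `x`. -/
noncomputable def deriv (N : A1Network σ) (k : N.Param → ℝ) (ℓ : ℕ) (x : σ) :
    MvPolynomial σ ℝ :=
  lieDIter (N.rhs k) ℓ (X x)

/-- The map `ψ` on rate constants is identifiable from the set of variables `T` with `D`
derivatives: whenever two positive rate vectors give the same derivatives
`x^{(ℓ)}`, `1 ≤ ℓ ≤ D`, `x ∈ T`, as polynomials, the values of `ψ` agree. -/
def IdentifiableFrom {α : Type*} (N : A1Network σ) (ψ : (N.Param → ℝ) → α)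
    (T : Set σ) (D : ℕ) : Prop :=
  ∀ k₁ k₂ : N.Param → ℝ, (∀ r, 0 < k₁ r) → (∀ r, 0 < k₂ r) →
    (∀ x ∈ T, ∀ ℓ, 1 ≤ ℓ → ℓ ≤ D → N.deriv k₁ ℓ x = N.deriv k₂ ℓ x) →
    ψ k₁ = ψ k₂


/-! ### Auxiliary lemmas -/

section Aux
variable {σ : Type*}

lemma single_one_eq' {a b : σ} (h : single a 1 = (single b 1 : σ →₀ ℕ)) : a = b := by
  rcases (Finsupp.single_eq_single_iff _ _ _ _).1 h with ⟨h1, _⟩ | ⟨h1, _⟩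
  · exact h1
  · omega

lemma pair_eq_pair' {a b c d : σ} :
    single a 1 + single b 1 = (single c 1 + single d 1 : σ →₀ ℕ) ↔
    (a = c ∧ b = d) ∨ (a = d ∧ b = c) := by
  classical
  constructor
  · intro h
    by_cases hac : a = c
    · subst hac
      left
      exact ⟨rfl, single_one_eq' (add_left_cancel h)⟩
    · by_cases had : a = d
      · subst had
        rw [add_comm (single c 1)] at h
        exact Or.inr ⟨rfl, single_one_eq' (add_left_cancel h)⟩
      · exfalso
        have hx := DFunLike.congr_fun h a
        simp only [Finsupp.add_apply, single_apply] at hx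
        rw [if_neg (fun hh : c = a => hac hh.symm), if_neg (fun hh : d = a => had hh.symm)] at hx
        split_ifs at hx <;> omega
  · rintro (⟨rfl, rfl⟩ | ⟨rfl, rfl⟩)
    · rfl
    · rw [add_comm]

lemma triple_eq' {a b c p q r : σ} :
    single a 1 + single b 1 + single c 1 = (single p 1 + single q 1 + single r 1 : σ →₀ ℕ) ↔
    (a = p ∧ (b = q ∧ c = r ∨ b = r ∧ c = q)) ∨
    (a = q ∧ (b = p ∧ c = r ∨ b = r ∧ c = p)) ∨
    (a = r ∧ (b = p ∧ c = q ∨ b = q ∧ c = p)) := by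
  classical
  constructor
  · intro h
    rw [add_assoc, add_assoc] at h
    by_cases hp : a = p
    · subst hp; exact Or.inl ⟨rfl, pair_eq_pair'.1 (add_left_cancel h)⟩
    · by_cases hq : a = q
      · subst hq
        rw [add_left_comm (single p 1) (single a 1)] at h
        exact Or.inr (Or.inl ⟨rfl, pair_eq_pair'.1 (add_left_cancel h)⟩)
      · by_cases hr : a = r
        · subst hr
          rw [add_comm (single q 1) (single a 1), add_left_comm (single p 1) (single a 1)] at h
          exact Or.inr (Or.inr ⟨rfl, pair_eq_pair'.1 (add_left_cancel h)⟩)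
        · exfalso
          have hx := DFunLike.congr_fun h a
          simp only [Finsupp.add_apply, single_apply] at hx
          rw [if_neg (fun hh : p = a => hp hh.symm), if_neg (fun hh : q = a => hq hh.symm),
            if_neg (fun hh : r = a => hr hh.symm)] at hx
          split_ifs at hx <;> omega
  · rintro (⟨rfl, (⟨rfl, rfl⟩ | ⟨rfl, rfl⟩)⟩ | ⟨rfl, (⟨rfl, rfl⟩ | ⟨rfl, rfl⟩)⟩ |
      ⟨rfl, (⟨rfl, rfl⟩ | ⟨rfl, rfl⟩)⟩) <;> abel

variable [Fintype σ] [DecidableEq σ]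

/-- degree of an exponent vector -/
def mdeg (d : σ →₀ ℕ) : ℕ := ∑ x : σ, d x

lemma mdeg_add (d e : σ →₀ ℕ) : mdeg (d + e) = mdeg d + mdeg e := by
  simp [mdeg, Finset.sum_add_distrib]

lemma mdeg_single (a : σ) (n : ℕ) : mdeg (single a n : σ →₀ ℕ) = n := by
  simp [mdeg, single_apply]

lemma ind_eq_zero {σ : Type*} [DecidableEq σ] {a x : σ} (h : a ≠ x) : ind a x = 0 := if_neg h
lemma ind_eq_one {σ : Type*} [DecidableEq σ] {a x : σ} (h : a = x) : ind a x = 1 := if_pos h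

lemma pair_ne_single (a b u : σ) : single a 1 + single b 1 ≠ (single u 1 : σ →₀ ℕ) := by
  intro h
  have := congrArg mdeg h
  rw [mdeg_add, mdeg_single, mdeg_single, mdeg_single] at this
  omega

lemma triple_ne_pair (a b c u v : σ) :
    single a 1 + single b 1 + single c 1 ≠ (single u 1 + single v 1 : σ →₀ ℕ) := by
  intro h
  have := congrArg mdeg h
  rw [mdeg_add, mdeg_add, mdeg_add, mdeg_single, mdeg_single, mdeg_single, mdeg_single,
    mdeg_single] at this
  omega

lemma triple_ne_single (a b c u : σ) :
    single a 1 + single b 1 + single c 1 ≠ (single u 1 : σ →₀ ℕ) := by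
  intro h
  have := congrArg mdeg h
  rw [mdeg_add, mdeg_add, mdeg_single, mdeg_single, mdeg_single, mdeg_single] at this
  omega

lemma lieD_add (f : σ → MvPolynomial σ ℝ) (p q : MvPolynomial σ ℝ) :
    lieD f (p + q) = lieD f p + lieD f q := by
  simp [lieD, map_add, add_mul, Finset.sum_add_distrib]

lemma lieD_sum {α : Type*} (f : σ → MvPolynomial σ ℝ) (s : Finset α)
    (g : α → MvPolynomial σ ℝ) : lieD f (∑ t ∈ s, g t) = ∑ t ∈ s, lieD f (g t) := by
  simp only [lieD, map_sum, Finset.sum_mul]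
  rw [Finset.sum_comm]

lemma lieD_X (f : σ → MvPolynomial σ ℝ) (x : σ) : lieD f (X x) = f x := by
  unfold lieD
  rw [Finset.sum_eq_single x]
  · rw [pderiv_X, Pi.single_eq_same, one_mul]
  · intro b _ hb
    rw [pderiv_X, Pi.single_eq_of_ne hb.symm, zero_mul]
  · exact fun h => absurd (Finset.mem_univ _) h

lemma lieD_mul (f : σ → MvPolynomial σ ℝ) (p q : MvPolynomial σ ℝ) :
    lieD f (p * q) = lieD f p * q + p * lieD f q := by
  unfold lieD
  rw [Finset.sum_mul, Finset.mul_sum, ← Finset.sum_add_distrib]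
  refine Finset.sum_congr rfl fun x _ => ?_
  rw [pderiv_mul]
  ring

lemma lieD_C_mul (f : σ → MvPolynomial σ ℝ) (c : ℝ) (p : MvPolynomial σ ℝ) :
    lieD f (C c * p) = C c * lieD f p := by
  unfold lieD
  rw [Finset.mul_sum]
  refine Finset.sum_congr rfl fun x _ => ?_
  rw [pderiv_C_mul]
  ring

lemma C_mul_XX (c : ℝ) (a b : σ) :
    C c * (X a * X b) = monomial (single a 1 + single b 1) c := by
  rw [X, X, monomial_mul, C_mul_monomial, one_mul, mul_one]

lemma C_mul_X' (c : ℝ) (a : σ) : C c * X a = monomial (single a 1) c := by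
  rw [X, C_mul_monomial, mul_one]

lemma X_mul_monomial' (w : σ) (e : σ →₀ ℕ) (c : ℝ) :
    X w * monomial e c = monomial (single w 1 + e) c := by
  rw [X, monomial_mul, one_mul]

end Aux

section Aux2
variable {σ : Type*} [Fintype σ] [DecidableEq σ]

/-- coefficient `a(ind U - ind Y - ind S)` of block `(i,j)` -/
def coA (N : A1Network σ) (k : N.Param → ℝ) (i : N.ι) (j : Fin (N.L i)) (x : σ) : ℝ :=
  k ⟨i, j, 0⟩ * (ind (N.U i ((j : ℕ) + 1)) x - ind (N.Y i) x - ind (N.S i (j : ℕ)) x)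

def coB (N : A1Network σ) (k : N.Param → ℝ) (i : N.ι) (j : Fin (N.L i)) (x : σ) : ℝ :=
  k ⟨i, j, 1⟩ * (ind (N.Y i) x + ind (N.S i (j : ℕ)) x - ind (N.U i ((j : ℕ) + 1)) x)

def coC (N : A1Network σ) (k : N.Param → ℝ) (i : N.ι) (j : Fin (N.L i)) (x : σ) : ℝ :=
  k ⟨i, j, 2⟩ * (ind (N.Y i) x + ind (N.S i ((j : ℕ) + 1)) x - ind (N.U i ((j : ℕ) + 1)) x)

/-- exponent vector of the complex `Y i + S i j` -/
noncomputable def eYS (N : A1Network σ) (i : N.ι) (j : Fin (N.L i)) : σ →₀ ℕ :=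
  single (N.Y i) 1 + single (N.S i (j : ℕ)) 1

/-- exponent vector of the complex `U i (j+1)` -/
noncomputable def eU (N : A1Network σ) (i : N.ι) (j : Fin (N.L i)) : σ →₀ ℕ :=
  single (N.U i ((j : ℕ) + 1)) 1

lemma rhs_eq (N : A1Network σ) (k : N.Param → ℝ) (z : σ) :
    N.rhs k z = ∑ i : N.ι, ∑ j : Fin (N.L i),
      (monomial (N.eYS i j) (N.coA k i j z) + monomial (N.eU i j) (N.coB k i j z) +
        monomial (N.eU i j) (N.coC k i j z)) := by
  unfold rhs coA coB coC eYS eU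
  refine Finset.sum_congr rfl fun i _ => Finset.sum_congr rfl fun j _ => ?_
  rw [C_mul_XX, C_mul_X', C_mul_X']

lemma coeff_rhs (N : A1Network σ) (k : N.Param → ℝ) (d : σ →₀ ℕ) (z : σ) :
    coeff d (N.rhs k z) = ∑ i : N.ι, ∑ j : Fin (N.L i),
      ((if N.eYS i j = d then N.coA k i j z else 0) +
        (if N.eU i j = d then N.coB k i j z + N.coC k i j z else 0)) := by
  rw [rhs_eq, coeff_sum]
  refine Finset.sum_congr rfl fun i _ => ?_
  rw [coeff_sum]
  refine Finset.sum_congr rfl fun j _ => ?_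
  rw [coeff_add, coeff_add, coeff_monomial, coeff_monomial, coeff_monomial]
  split_ifs <;> ring

lemma coeff_X_mul_rhs (N : A1Network σ) (k : N.Param → ℝ) (d : σ →₀ ℕ) (w z : σ) :
    coeff d (X w * N.rhs k z) = ∑ i : N.ι, ∑ j : Fin (N.L i),
      ((if single w 1 + N.eYS i j = d then N.coA k i j z else 0) +
        (if single w 1 + N.eU i j = d then N.coB k i j z + N.coC k i j z else 0)) := by
  rw [rhs_eq, Finset.mul_sum]
  rw [coeff_sum]
  refine Finset.sum_congr rfl fun i _ => ?_
  rw [Finset.mul_sum, coeff_sum]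
  refine Finset.sum_congr rfl fun j _ => ?_
  rw [mul_add, mul_add, X_mul_monomial', X_mul_monomial', X_mul_monomial',
    coeff_add, coeff_add, coeff_monomial, coeff_monomial, coeff_monomial]
  split_ifs <;> ring

lemma deriv_one (N : A1Network σ) (k : N.Param → ℝ) (z : σ) :
    N.deriv k 1 z = N.rhs k z := by
  show lieD (N.rhs k) (X z) = N.rhs k z
  exact lieD_X _ _

lemma deriv_two (N : A1Network σ) (k : N.Param → ℝ) (z : σ) :
    N.deriv k 2 z = ∑ i : N.ι, ∑ j : Fin (N.L i),
      (C (N.coA k i j z) *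
          (N.rhs k (N.Y i) * X (N.S i (j : ℕ)) + X (N.Y i) * N.rhs k (N.S i (j : ℕ))) +
        C (N.coB k i j z) * N.rhs k (N.U i ((j : ℕ) + 1)) +
        C (N.coC k i j z) * N.rhs k (N.U i ((j : ℕ) + 1))) := by
  have : N.deriv k 2 z = lieD (N.rhs k) (N.rhs k z) := by
    show lieD (N.rhs k) (lieD (N.rhs k) (X z)) = _
    rw [lieD_X]
  rw [this]
  conv_lhs => rw [rhs_eq]
  rw [lieD_sum]
  refine Finset.sum_congr rfl fun i _ => ?_
  rw [lieD_sum]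
  refine Finset.sum_congr rfl fun j _ => ?_
  unfold eYS eU coA coB coC
  rw [← C_mul_XX, ← C_mul_X', ← C_mul_X']
  rw [lieD_add, lieD_add, lieD_C_mul, lieD_C_mul, lieD_C_mul, lieD_mul]
  simp only [lieD_X]

lemma coeff_deriv_two (N : A1Network σ) (k : N.Param → ℝ) (d : σ →₀ ℕ) (z : σ) :
    coeff d (N.deriv k 2 z) = ∑ i : N.ι, ∑ j : Fin (N.L i),
      (N.coA k i j z * (coeff d (X (N.S i (j : ℕ)) * N.rhs k (N.Y i)) +
          coeff d (X (N.Y i) * N.rhs k (N.S i (j : ℕ)))) +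
        (N.coB k i j z + N.coC k i j z) * coeff d (N.rhs k (N.U i ((j : ℕ) + 1)))) := by
  rw [deriv_two, coeff_sum]
  refine Finset.sum_congr rfl fun i _ => ?_
  rw [coeff_sum]
  refine Finset.sum_congr rfl fun j _ => ?_
  rw [coeff_add, coeff_add, coeff_C_mul, coeff_C_mul, coeff_C_mul, coeff_add,
    mul_comm (N.rhs k (N.Y i)) (X (N.S i (j : ℕ)))]
  ring

end Aux2

section Aux3
set_option linter.unusedSectionVars false
variable {σ : Type*} [Fintype σ] [DecidableEq σ] {N : A1Network σ}

lemma Y_ne_S {part : σ → ℕ} (hp : N.IsPartition part) (i : N.ι) (j : ℕ) (hj : j ≤ N.L i) :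
    N.Y i ≠ N.S i j := by
  obtain ⟨α, -, hSp, hY, -⟩ := hp.2 i
  intro h
  exact hY (by rw [h, hSp j hj])

lemma X3' {part : σ → ℕ} (hp : N.IsPartition part) {i i' : N.ι} {j j' j'' : ℕ}
    (hj : j ≤ N.L i') (hj' : j' ≤ N.L i) (hj'' : j'' ≤ N.L i')
    (hY : N.Y i = N.S i' j) (hSS : N.S i j' = N.S i' j'') : False := by
  obtain ⟨α, -, hSa, hYa, -⟩ := hp.2 i
  obtain ⟨α', -, hSa', -, -⟩ := hp.2 i'
  apply hYa
  rw [hY, hSa' j hj, ← hSa' j'' hj'', ← hSS, hSa j' hj']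

lemma same_unique' (h1 : N.Assumption1) {i i' : N.ι} {j j' : ℕ}
    (hj : j ≤ N.L i) (hj' : j' ≤ N.L i')
    (hY : N.Y i = N.Y i') (hs : N.S i j = N.S i' j') : i = i' := by
  refine h1.complex_unique i i' j j' hj hj' fun x => ?_
  rw [hY, hs]

lemma swap_false' (h1 : N.Assumption1) {part : σ → ℕ} (hp : N.IsPartition part)
    {i i' : N.ι} {j j' : ℕ} (hj : j ≤ N.L i) (hj' : j' ≤ N.L i')
    (hY : N.Y i = N.S i' j') (hs : N.S i j = N.Y i') : False := by
  have hii : i = i' := by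
    refine h1.complex_unique i i' j j' hj hj' fun x => ?_
    rw [hY, hs]
    unfold ind
    ring
  subst hii
  exact Y_ne_S hp i j' hj' hY

variable (h1 : N.Assumption1) {part : σ → ℕ} (hp : N.IsPartition part)
  {i₁ i₂ : N.ι} (hL : N.L i₂ = N.L i₁)
  (hS2 : ∀ j, j ≤ N.L i₁ → N.S i₂ j = N.S i₁ (N.L i₁ - j))

include h1 hp hL hS2

lemma hS0 : N.S i₂ 0 = N.S i₁ (N.L i₁) := by simpa using hS2 0 (by omega)

lemma hY2sL : N.Y i₂ ≠ N.S i₁ (N.L i₁) := by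
  rw [← hS0 h1 hp hL hS2]
  exact Y_ne_S hp i₂ 0 (by have := N.Lpos i₂; omega)

lemma hSmsL {m : ℕ} (hm : m ≤ N.L i₂) (hm0 : m ≠ 0) : N.S i₂ m ≠ N.S i₁ (N.L i₁) := by
  rw [← hS0 h1 hp hL hS2]
  intro h
  exact hm0 (h1.S_inj i₂ m 0 hm (by omega) h)

/-- E1: the coefficient of `ỹ·s_L` in `ṡ_L` is `-ã_L`. -/
lemma E1 (k : N.Param → ℝ) :
    coeff (single (N.Y i₂) 1 + single (N.S i₁ (N.L i₁)) 1) (N.rhs k (N.S i₁ (N.L i₁))) =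
      - k ⟨i₂, ⟨0, N.Lpos i₂⟩, 0⟩ := by
  set sL := N.S i₁ (N.L i₁) with hsL
  rw [coeff_rhs]
  rw [Finset.sum_eq_single i₂]
  · rw [Finset.sum_eq_single (⟨0, N.Lpos i₂⟩ : Fin (N.L i₂))]
    · rw [if_pos, if_neg, add_zero]
      · unfold coA
        rw [ind, ind, ind, if_neg, if_neg, if_pos (hS0 h1 hp hL hS2)]
        · ring
        · exact hY2sL h1 hp hL hS2
        · exact h1.U_ne_S i₂ _ i₁ (N.L i₁) le_rfl
      · intro h
        unfold eU at h
        exact pair_ne_single (N.Y i₂) sL _ h.symm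
      · unfold eYS
        rw [hS0 h1 hp hL hS2]
    · intro j _ hj
      rw [if_neg, if_neg, add_zero]
      · intro h
        unfold eU at h
        exact pair_ne_single (N.Y i₂) sL _ h.symm
      · unfold eYS
        rw [pair_eq_pair']
        rintro (⟨-, hb⟩ | ⟨ha, -⟩)
        · exact hj (Fin.ext (h1.S_inj i₂ (j : ℕ) 0 j.2.le (by have := N.Lpos i₂; omega)
            (hb.trans (hS0 h1 hp hL hS2).symm)))
        · exact hY2sL h1 hp hL hS2 ha
    · exact fun h => absurd (Finset.mem_univ _) h
  · intro i _ hi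
    refine Finset.sum_eq_zero fun j _ => ?_
    rw [if_neg, if_neg, add_zero]
    · intro h
      unfold eU at h
      exact pair_ne_single (N.Y i₂) sL _ h.symm
    · unfold eYS
      rw [pair_eq_pair']
      rintro (⟨ha, hb⟩ | ⟨ha, hb⟩)
      · exact hi (same_unique' h1 (j := (j : ℕ)) (j' := 0) j.2.le
          (by have := N.Lpos i₂; omega) ha (hb.trans (hS0 h1 hp hL hS2).symm))
      · exact swap_false' h1 hp j.2.le (by have := N.Lpos i₂; omega : (0:ℕ) ≤ N.L i₂)
          (by rw [ha, hS0 h1 hp hL hS2]) hb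
  · exact fun h => absurd (Finset.mem_univ _) h

end Aux3

section Aux4
set_option linter.unusedSectionVars false
variable {σ : Type*} [Fintype σ] [DecidableEq σ] {N : A1Network σ}
variable (h1 : N.Assumption1) {part : σ → ℕ} (hp : N.IsPartition part)
  {i₁ i₂ : N.ι} (hL : N.L i₂ = N.L i₁)
  (hS2 : ∀ j, j ≤ N.L i₁ → N.S i₂ j = N.S i₁ (N.L i₁ - j))

include h1 hp hL hS2

/-- generic linear coefficient: `coeff v_L (rhs z) = coB + coC` of block `(i₂,0)` at `z` -/
lemma E2gen (k : N.Param → ℝ) (z : σ) :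
    coeff (single (N.U i₂ (0 + 1)) 1) (N.rhs k z) =
      coB N k i₂ ⟨0, N.Lpos i₂⟩ z +
        coC N k i₂ ⟨0, N.Lpos i₂⟩ z := by
  rw [coeff_rhs]
  rw [Finset.sum_eq_single i₂]
  · rw [Finset.sum_eq_single (⟨0, N.Lpos i₂⟩ : Fin (N.L i₂))]
    · have he : N.eU i₂ (⟨0, N.Lpos i₂⟩ : Fin (N.L i₂)) =
          single (N.U i₂ (0 + 1)) 1 := rfl
      rw [if_neg, if_pos he, zero_add]
      unfold eYS
      exact pair_ne_single _ _ _
    · intro j _ hj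
      rw [if_neg, if_neg, add_zero]
      · intro h
        unfold eU at h
        have := h1.U_inj i₂ j i₂ ⟨0, N.Lpos i₂⟩ (single_one_eq' h)
        exact hj (Fin.ext this.2)
      · unfold eYS
        exact pair_ne_single _ _ _
    · exact fun h => absurd (Finset.mem_univ _) h
  · intro i _ hi
    refine Finset.sum_eq_zero fun j _ => ?_
    rw [if_neg, if_neg, add_zero]
    · intro h
      unfold eU at h
      exact hi (h1.U_inj i j i₂ ⟨0, N.Lpos i₂⟩ (single_one_eq' h)).1
    · unfold eYS
      exact pair_ne_single _ _ _
  · exact fun h => absurd (Finset.mem_univ _) h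

/-- E2: the coefficient of `v_L` in `ṡ_L` is `b̃_L`. -/
lemma E2 (k : N.Param → ℝ) :
    coeff (single (N.U i₂ (0 + 1)) 1) (N.rhs k (N.S i₁ (N.L i₁))) =
      k ⟨i₂, ⟨0, N.Lpos i₂⟩, 1⟩ := by
  rw [E2gen h1 hp hL hS2]
  unfold coB coC
  simp only [Fin.val_mk, zero_add]
  rw [ind_eq_one (hS0 h1 hp hL hS2), ind_eq_zero (hY2sL h1 hp hL hS2),
    ind_eq_zero (h1.U_ne_S i₂ ⟨0, N.Lpos i₂⟩ i₁ (N.L i₁) le_rfl),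
    ind_eq_zero (hSmsL h1 hp hL hS2 (by have := N.Lpos i₂; omega) one_ne_zero)]
  ring

/-- vanishing: `coeff (single u) (X w * rhs z) = 0` -/
lemma Z1 (k : N.Param → ℝ) (u w z : σ) :
    coeff (single u 1) (X w * N.rhs k z) = 0 := by
  rw [coeff_X_mul_rhs]
  refine Finset.sum_eq_zero fun i _ => Finset.sum_eq_zero fun j _ => ?_
  rw [if_neg, if_neg, add_zero]
  · intro h
    unfold eU at h
    exact pair_ne_single w (N.U i ((j : ℕ) + 1)) u h
  · intro h
    unfold eYS at h
    rw [← add_assoc] at h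
    exact triple_ne_single w (N.Y i) (N.S i (j : ℕ)) u h

/-- E3: the coefficient of `v_L` in `s̈_L` is `-b̃_L(b̃_L+c̃_L)`. -/
lemma E3 (k : N.Param → ℝ) :
    coeff (single (N.U i₂ (0 + 1)) 1) (N.deriv k 2 (N.S i₁ (N.L i₁))) =
      - k ⟨i₂, ⟨0, N.Lpos i₂⟩, 1⟩ *
        (k ⟨i₂, ⟨0, N.Lpos i₂⟩, 1⟩ +
          k ⟨i₂, ⟨0, N.Lpos i₂⟩, 2⟩) := by
  set z0 : Fin (N.L i₂) := ⟨0, N.Lpos i₂⟩ with hz0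
  rw [coeff_deriv_two]
  have key : ∀ (i : N.ι) (j : Fin (N.L i)),
      coA N k i j (N.S i₁ (N.L i₁)) *
          (coeff (single (N.U i₂ (0 + 1)) 1) (X (N.S i (j : ℕ)) * N.rhs k (N.Y i)) +
            coeff (single (N.U i₂ (0 + 1)) 1) (X (N.Y i) * N.rhs k (N.S i (j : ℕ)))) +
        (coB N k i j (N.S i₁ (N.L i₁)) + coC N k i j (N.S i₁ (N.L i₁))) *
          coeff (single (N.U i₂ (0 + 1)) 1) (N.rhs k (N.U i ((j : ℕ) + 1))) =
      (coB N k i j (N.S i₁ (N.L i₁)) + coC N k i j (N.S i₁ (N.L i₁))) *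
        (-(k ⟨i₂, z0, 1⟩ + k ⟨i₂, z0, 2⟩) * ind (N.U i₂ (0 + 1)) (N.U i ((j : ℕ) + 1))) := by
    intro i j
    rw [Z1 h1 hp hL hS2, Z1 h1 hp hL hS2, E2gen h1 hp hL hS2]
    unfold coB coC
    simp only [Fin.val_mk, zero_add]
    rw [ind_eq_zero (fun h => h1.U_ne_Y i j i₂ h.symm),
      ind_eq_zero (fun h => h1.U_ne_S i j i₂ 0 (by have := N.Lpos i₂; omega) h.symm),
      ind_eq_zero (fun h => h1.U_ne_S i j i₂ 1 (by have := N.Lpos i₂; omega) h.symm)]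
    ring
  rw [Finset.sum_congr rfl fun i _ => Finset.sum_congr rfl fun j _ => key i j]
  rw [Finset.sum_eq_single i₂]
  · rw [Finset.sum_eq_single z0]
    · rw [ind_eq_one rfl]
      have hB : coB N k i₂ z0 (N.S i₁ (N.L i₁)) = k ⟨i₂, z0, 1⟩ := by
        unfold coB
        simp only [hz0, Fin.val_mk, zero_add]
        rw [ind_eq_one (hS0 h1 hp hL hS2), ind_eq_zero (hY2sL h1 hp hL hS2),
          ind_eq_zero (h1.U_ne_S i₂ z0 i₁ (N.L i₁) le_rfl)]
        ring
      have hC : coC N k i₂ z0 (N.S i₁ (N.L i₁)) = 0 := by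
        unfold coC
        simp only [hz0, Fin.val_mk, zero_add]
        rw [ind_eq_zero (hY2sL h1 hp hL hS2),
          ind_eq_zero (h1.U_ne_S i₂ z0 i₁ (N.L i₁) le_rfl),
          ind_eq_zero (hSmsL h1 hp hL hS2 (by have := N.Lpos i₂; omega) one_ne_zero)]
        ring
      rw [hB, hC]
      ring
    · intro j _ hj
      rw [ind_eq_zero, mul_zero, mul_zero]
      intro h
      exact hj (Fin.ext (h1.U_inj i₂ ⟨0, N.Lpos i₂⟩ i₂ j h).2.symm)
    · exact fun h => absurd (Finset.mem_univ _) h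
  · intro i _ hi
    refine Finset.sum_eq_zero fun j _ => ?_
    rw [ind_eq_zero, mul_zero, mul_zero]
    intro h
    exact hi (h1.U_inj i₂ ⟨0, N.Lpos i₂⟩ i j h).1.symm
  · exact fun h => absurd (Finset.mem_univ _) h

end Aux4

section Aux5
set_option linter.unusedSectionVars false
variable {σ : Type*} [Fintype σ] [DecidableEq σ] {N : A1Network σ}
variable (h1 : N.Assumption1) {part : σ → ℕ} (hp : N.IsPartition part)
  {i₁ i₂ : N.ι} (hL : N.L i₂ = N.L i₁)
  (hS2 : ∀ j, j ≤ N.L i₁ → N.S i₂ j = N.S i₁ (N.L i₁ - j))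

include h1 hp hL hS2

lemma E4a (k : N.Param → ℝ) {m : ℕ} (hm2 : m < N.L i₂) (w z : σ)
    (hw : w ≠ N.U i₂ (m + 1)) :
    coeff (single (N.U i₂ (m + 1)) 1 + single (N.S i₁ (N.L i₁)) 1) (X w * N.rhs k z) =
      if w = N.S i₁ (N.L i₁) then coB N k i₂ ⟨m, hm2⟩ z + coC N k i₂ ⟨m, hm2⟩ z else 0 := by
  rw [coeff_X_mul_rhs]
  rw [Finset.sum_eq_single i₂]
  · rw [Finset.sum_eq_single (⟨m, hm2⟩ : Fin (N.L i₂))]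
    · have he : N.eU i₂ (⟨m, hm2⟩ : Fin (N.L i₂)) = single (N.U i₂ (m + 1)) 1 := rfl
      rw [he]
      rw [if_neg, zero_add]
      · by_cases hws : w = N.S i₁ (N.L i₁)
        · rw [if_pos hws, if_pos]
          subst hws
          rw [add_comm]
        · rw [if_neg hws, if_neg]
          intro h
          rcases pair_eq_pair'.1 h with ⟨ha, -⟩ | ⟨ha, -⟩
          · exact hw ha
          · exact hws ha
      · intro h
        unfold eYS at h
        rw [← add_assoc] at h
        exact triple_ne_pair _ _ _ _ _ h
    · intro j _ hj
      rw [if_neg, if_neg, add_zero]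
      · intro h
        unfold eU at h
        rcases pair_eq_pair'.1 h with ⟨ha, -⟩ | ⟨-, hb⟩
        · exact hw ha
        · exact hj (Fin.ext (h1.U_inj i₂ j i₂ ⟨m, hm2⟩ hb).2)
      · intro h
        unfold eYS at h
        rw [← add_assoc] at h
        exact triple_ne_pair _ _ _ _ _ h
    · exact fun h => absurd (Finset.mem_univ _) h
  · intro i _ hi
    refine Finset.sum_eq_zero fun j _ => ?_
    rw [if_neg, if_neg, add_zero]
    · intro h
      unfold eU at h
      rcases pair_eq_pair'.1 h with ⟨ha, -⟩ | ⟨-, hb⟩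
      · exact hw ha
      · exact hi (h1.U_inj i j i₂ ⟨m, hm2⟩ hb).1
    · intro h
      unfold eYS at h
      rw [← add_assoc] at h
      exact triple_ne_pair _ _ _ _ _ h
  · exact fun h => absurd (Finset.mem_univ _) h

lemma E4b (k : N.Param → ℝ) {m : ℕ} (hm2 : m < N.L i₂) (z : σ) :
    coeff (single (N.U i₂ (m + 1)) 1 + single (N.S i₁ (N.L i₁)) 1) (N.rhs k z) = 0 := by
  rw [coeff_rhs]
  refine Finset.sum_eq_zero fun i _ => Finset.sum_eq_zero fun j _ => ?_
  rw [if_neg, if_neg, add_zero]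
  · intro h
    unfold eU at h
    exact pair_ne_single _ _ _ h.symm
  · intro h
    unfold eYS at h
    rcases pair_eq_pair'.1 h with ⟨ha, -⟩ | ⟨-, hb⟩
    · exact h1.U_ne_Y i₂ ⟨m, hm2⟩ i ha.symm
    · exact h1.U_ne_S i₂ ⟨m, hm2⟩ i (j : ℕ) j.2.le hb.symm

/-- E4: the coefficient of `v_m s_L` in `s̈_L` is `-ã_L K̃` -/
lemma E4 (k : N.Param → ℝ) {m : ℕ} (hm1 : 1 ≤ m) (hm2 : m < N.L i₂) :
    coeff (single (N.U i₂ (m + 1)) 1 + single (N.S i₁ (N.L i₁)) 1)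
        (N.deriv k 2 (N.S i₁ (N.L i₁))) =
      - k ⟨i₂, ⟨0, N.Lpos i₂⟩, 0⟩ *
        (k ⟨i₂, ⟨m, hm2⟩, 1⟩ + k ⟨i₂, ⟨m, hm2⟩, 2⟩) := by
  set sL := N.S i₁ (N.L i₁) with hsL
  rw [coeff_deriv_two]
  rw [Finset.sum_eq_single i₂]
  · rw [Finset.sum_eq_single (⟨0, N.Lpos i₂⟩ : Fin (N.L i₂))]
    · rw [E4b h1 hp hL hS2 k hm2, mul_zero, add_zero]
      rw [E4a h1 hp hL hS2 k hm2 _ _ (fun h => h1.U_ne_S i₂ ⟨m, hm2⟩ i₂ _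
          (by have := N.Lpos i₂; omega : (0:ℕ) ≤ N.L i₂) h.symm),
        E4a h1 hp hL hS2 k hm2 _ _ (fun h => h1.U_ne_Y i₂ ⟨m, hm2⟩ i₂ h.symm)]
      rw [if_pos (by simpa using hS0 h1 hp hL hS2), if_neg (hY2sL h1 hp hL hS2), add_zero]
      have hcoA : coA N k i₂ ⟨0, N.Lpos i₂⟩ sL =
          - k ⟨i₂, ⟨0, N.Lpos i₂⟩, 0⟩ := by
        unfold coA
        rw [ind_eq_zero (h1.U_ne_S i₂ ⟨0, N.Lpos i₂⟩ i₁ (N.L i₁) le_rfl),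
          ind_eq_zero (hY2sL h1 hp hL hS2), ind_eq_one (hS0 h1 hp hL hS2)]
        ring
      have hBC : coB N k i₂ ⟨m, hm2⟩ (N.Y i₂) + coC N k i₂ ⟨m, hm2⟩ (N.Y i₂) =
          k ⟨i₂, ⟨m, hm2⟩, 1⟩ + k ⟨i₂, ⟨m, hm2⟩, 2⟩ := by
        unfold coB coC
        simp only [Fin.val_mk]
        rw [ind_eq_one rfl,
          ind_eq_zero (fun h => Y_ne_S hp i₂ m hm2.le h.symm),
          ind_eq_zero (fun h => Y_ne_S hp i₂ (m+1) hm2 h.symm),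
          ind_eq_zero (fun h => h1.U_ne_Y i₂ ⟨m, hm2⟩ i₂ h)]
        ring
      rw [hcoA, hBC]
    · intro j _ hj
      rw [E4b h1 hp hL hS2 k hm2, mul_zero, add_zero]
      have hcoA : coA N k i₂ j sL = 0 := by
        unfold coA
        rw [ind_eq_zero (h1.U_ne_S i₂ j i₁ (N.L i₁) le_rfl),
          ind_eq_zero (hY2sL h1 hp hL hS2),
          ind_eq_zero (hSmsL h1 hp hL hS2 j.2.le (fun h0 => hj (Fin.ext h0)))]
        ring
      rw [hcoA, zero_mul]
    · exact fun h => absurd (Finset.mem_univ _) h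
  · intro i _ hi
    refine Finset.sum_eq_zero fun j _ => ?_
    rw [E4b h1 hp hL hS2 k hm2, mul_zero, add_zero]
    by_cases hA : N.S i (j : ℕ) = sL
    · have hYnot : N.Y i ≠ sL := fun hB =>
        X3' hp (i := i) (i' := i₂) (j := 0) (j' := (j : ℕ)) (j'' := 0)
          (by have := N.Lpos i₂; omega) j.2.le (by have := N.Lpos i₂; omega)
          (hB.trans (hS0 h1 hp hL hS2).symm) (hA.trans (hS0 h1 hp hL hS2).symm)
      rw [E4a h1 hp hL hS2 k hm2 _ _ (fun h => h1.U_ne_S i₂ ⟨m, hm2⟩ i _ j.2.le h.symm),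
        E4a h1 hp hL hS2 k hm2 _ _ (fun h => h1.U_ne_Y i₂ ⟨m, hm2⟩ i h.symm),
        if_pos hA, if_neg hYnot, add_zero]
      have hBC : coB N k i₂ ⟨m, hm2⟩ (N.Y i) + coC N k i₂ ⟨m, hm2⟩ (N.Y i) = 0 := by
        unfold coB coC
        simp only [Fin.val_mk]
        rw [ind_eq_zero (fun h => hi (same_unique' h1 (j := (j : ℕ)) (j' := 0) j.2.le
            (by have := N.Lpos i₂; omega) h.symm (hA.trans (hS0 h1 hp hL hS2).symm))),
          ind_eq_zero (fun h => X3' hp (i := i) (i' := i₂) (j := m) (j' := (j : ℕ)) (j'' := 0)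
            hm2.le j.2.le (by have := N.Lpos i₂; omega) h.symm
            (hA.trans (hS0 h1 hp hL hS2).symm)),
          ind_eq_zero (fun h => X3' hp (i := i) (i' := i₂) (j := m+1) (j' := (j : ℕ)) (j'' := 0)
            hm2 j.2.le (by have := N.Lpos i₂; omega) h.symm
            (hA.trans (hS0 h1 hp hL hS2).symm)),
          ind_eq_zero (fun h => h1.U_ne_Y i₂ ⟨m, hm2⟩ i h)]
        ring
      rw [hBC, mul_zero]
    · by_cases hB : N.Y i = sL
      · have hYS0 : N.Y i = N.S i₂ 0 := hB.trans (hS0 h1 hp hL hS2).symm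
        rw [E4a h1 hp hL hS2 k hm2 _ _ (fun h => h1.U_ne_S i₂ ⟨m, hm2⟩ i _ j.2.le h.symm),
          E4a h1 hp hL hS2 k hm2 _ _ (fun h => h1.U_ne_Y i₂ ⟨m, hm2⟩ i h.symm),
          if_neg hA, if_pos hB, zero_add]
        have hBC : coB N k i₂ ⟨m, hm2⟩ (N.S i (j : ℕ)) + coC N k i₂ ⟨m, hm2⟩ (N.S i (j : ℕ)) = 0 := by
          unfold coB coC
          simp only [Fin.val_mk]
          rw [ind_eq_zero (fun h => swap_false' h1 hp (j := (j : ℕ)) (j' := 0) j.2.le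
              (by have := N.Lpos i₂; omega) hYS0 h.symm),
            ind_eq_zero (fun h => X3' hp (i := i) (i' := i₂) (j := 0) (j' := (j : ℕ)) (j'' := m)
              (by have := N.Lpos i₂; omega) j.2.le hm2.le hYS0 h.symm),
            ind_eq_zero (fun h => X3' hp (i := i) (i' := i₂) (j := 0) (j' := (j : ℕ)) (j'' := m+1)
              (by have := N.Lpos i₂; omega) j.2.le hm2 hYS0 h.symm),
            ind_eq_zero (fun h => h1.U_ne_S i₂ ⟨m, hm2⟩ i (j : ℕ) j.2.le h)]
          ring
        rw [hBC, mul_zero]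
      · have hcoA : coA N k i j sL = 0 := by
          unfold coA
          rw [ind_eq_zero (h1.U_ne_S i j i₁ (N.L i₁) le_rfl),
            ind_eq_zero hB, ind_eq_zero hA]
          ring
        rw [hcoA, zero_mul]
  · exact fun h => absurd (Finset.mem_univ _) h

end Aux5

section Aux6
set_option linter.unusedSectionVars false
variable {σ : Type*} [Fintype σ] [DecidableEq σ] {N : A1Network σ}
variable (h1 : N.Assumption1) {part : σ → ℕ} (hp : N.IsPartition part)
  {i₁ i₂ : N.ι} (hL : N.L i₂ = N.L i₁)
  (hS2 : ∀ j, j ≤ N.L i₁ → N.S i₂ j = N.S i₁ (N.L i₁ - j))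

include h1 hp hL hS2

lemma E5c (k : N.Param → ℝ) {m : ℕ} (hm2 : m < N.L i₂) (z : σ) :
    coeff (single (N.Y i₂) 1 + single (N.S i₂ m) 1 + single (N.S i₁ (N.L i₁)) 1)
      (N.rhs k z) = 0 := by
  rw [coeff_rhs]
  refine Finset.sum_eq_zero fun i _ => Finset.sum_eq_zero fun j _ => ?_
  rw [if_neg, if_neg, add_zero]
  · intro h
    unfold eU at h
    exact triple_ne_single _ _ _ _ h.symm
  · intro h
    unfold eYS at h
    exact triple_ne_pair _ _ _ _ _ h.symm

lemma E5b (k : N.Param → ℝ) {m : ℕ} (hm2 : m < N.L i₂) (z : σ) :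
    coeff (single (N.Y i₂) 1 + single (N.S i₂ m) 1 + single (N.S i₁ (N.L i₁)) 1)
      (X (N.Y i₂) * N.rhs k z) = 0 := by
  have L0 : (0:ℕ) ≤ N.L i₂ := by omega
  rw [coeff_X_mul_rhs]
  refine Finset.sum_eq_zero fun i _ => Finset.sum_eq_zero fun j _ => ?_
  rw [if_neg, if_neg, add_zero]
  · intro h
    unfold eU at h
    exact triple_ne_pair _ _ _ _ _ h.symm
  · intro h
    unfold eYS at h
    rw [← add_assoc] at h
    rcases triple_eq'.1 h with ⟨-, hbc⟩ | ⟨hq, -⟩ | ⟨hr, -⟩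
    · rcases hbc with ⟨hb, hc⟩ | ⟨hb, hc⟩
      · exact X3' hp (i := i) (i' := i₂) (j := m) (j' := (j : ℕ)) (j'' := 0)
          hm2.le j.2.le L0 hb (hc.trans (hS0 h1 hp hL hS2).symm)
      · exact X3' hp (i := i) (i' := i₂) (j := 0) (j' := (j : ℕ)) (j'' := m)
          L0 j.2.le hm2.le (hb.trans (hS0 h1 hp hL hS2).symm) hc
    · exact Y_ne_S hp i₂ m hm2.le hq
    · exact hY2sL h1 hp hL hS2 hr

lemma E5a (k : N.Param → ℝ) {m : ℕ} (hm2 : m < N.L i₂) (w z : σ)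
    (hwY : w ≠ N.Y i₂) (hwS : w ≠ N.S i₂ m) :
    coeff (single (N.Y i₂) 1 + single (N.S i₂ m) 1 + single (N.S i₁ (N.L i₁)) 1)
      (X w * N.rhs k z) =
      if w = N.S i₁ (N.L i₁) then coA N k i₂ ⟨m, hm2⟩ z else 0 := by
  have L0 : (0:ℕ) ≤ N.L i₂ := by omega
  rw [coeff_X_mul_rhs]
  rw [Finset.sum_eq_single i₂]
  · rw [Finset.sum_eq_single (⟨m, hm2⟩ : Fin (N.L i₂))]
    · have hne2 : single w 1 + N.eU i₂ (⟨m, hm2⟩ : Fin (N.L i₂)) ≠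
          single (N.Y i₂) 1 + single (N.S i₂ m) 1 + single (N.S i₁ (N.L i₁)) 1 := by
        intro h
        unfold eU at h
        exact triple_ne_pair _ _ _ _ _ h.symm
      rw [if_neg hne2, add_zero]
      by_cases hws : w = N.S i₁ (N.L i₁)
      · rw [if_pos (show single w 1 + N.eYS i₂ (⟨m, hm2⟩ : Fin (N.L i₂)) = _ by
            unfold eYS
            rw [← add_assoc]
            exact triple_eq'.2 (Or.inr (Or.inr ⟨hws, Or.inl ⟨rfl, rfl⟩⟩))), if_pos hws]
      · rw [if_neg (show ¬(single w 1 + N.eYS i₂ (⟨m, hm2⟩ : Fin (N.L i₂)) = _) from fun h => by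
            unfold eYS at h
            rw [← add_assoc] at h
            rcases triple_eq'.1 h with ⟨ha, -⟩ | ⟨ha, -⟩ | ⟨ha, -⟩
            · exact hwY ha
            · exact hwS ha
            · exact hws ha), if_neg hws]
    · intro j _ hj
      rw [if_neg, if_neg, add_zero]
      · intro h
        unfold eU at h
        exact triple_ne_pair _ _ _ _ _ h.symm
      · intro h
        unfold eYS at h
        rw [← add_assoc] at h
        rcases triple_eq'.1 h with ⟨ha, -⟩ | ⟨ha, -⟩ | ⟨-, ⟨-, hc⟩ | ⟨hb, -⟩⟩
        · exact hwY ha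
        · exact hwS ha
        · exact hj (Fin.ext (h1.S_inj i₂ (j : ℕ) m j.2.le hm2.le hc))
        · exact Y_ne_S hp i₂ m hm2.le hb
    · exact fun h => absurd (Finset.mem_univ _) h
  · intro i _ hi
    refine Finset.sum_eq_zero fun j _ => ?_
    rw [if_neg, if_neg, add_zero]
    · intro h
      unfold eU at h
      exact triple_ne_pair _ _ _ _ _ h.symm
    · intro h
      unfold eYS at h
      rw [← add_assoc] at h
      rcases triple_eq'.1 h with ⟨ha, -⟩ | ⟨ha, -⟩ | ⟨-, ⟨hb, hc⟩ | ⟨hb, hc⟩⟩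
      · exact hwY ha
      · exact hwS ha
      · exact hi (same_unique' h1 (j := (j : ℕ)) (j' := m) j.2.le hm2.le hb hc)
      · exact swap_false' h1 hp (j := (j : ℕ)) (j' := m) j.2.le hm2.le hb hc
  · exact fun h => absurd (Finset.mem_univ _) h

/-- E5: the coefficient of `ỹ s_j s_L` in `s̈_L` is `ã_L ã_j`. -/
lemma E5 (k : N.Param → ℝ) {m : ℕ} (hm1 : 1 ≤ m) (hm2 : m < N.L i₂) :
    coeff (single (N.Y i₂) 1 + single (N.S i₂ m) 1 + single (N.S i₁ (N.L i₁)) 1)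
        (N.deriv k 2 (N.S i₁ (N.L i₁))) =
      k ⟨i₂, ⟨0, N.Lpos i₂⟩, 0⟩ * k ⟨i₂, ⟨m, hm2⟩, 0⟩ := by
  have L0 : (0:ℕ) ≤ N.L i₂ := by omega
  set sL := N.S i₁ (N.L i₁) with hsL
  rw [coeff_deriv_two]
  rw [Finset.sum_eq_single i₂]
  · rw [Finset.sum_eq_single (⟨0, N.Lpos i₂⟩ : Fin (N.L i₂))]
    · rw [E5c h1 hp hL hS2 k hm2, mul_zero, add_zero]
      rw [E5a h1 hp hL hS2 k hm2 _ _
          (fun h => Y_ne_S hp i₂ 0 L0 h.symm)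
          (fun h => by have := h1.S_inj i₂ 0 m L0 hm2.le h; omega)]
      rw [if_pos (hS0 h1 hp hL hS2)]
      rw [E5b h1 hp hL hS2 k hm2, add_zero]
      have h0 : coA N k i₂ ⟨0, N.Lpos i₂⟩ sL =
          - k ⟨i₂, ⟨0, N.Lpos i₂⟩, 0⟩ := by
        unfold coA
        rw [ind_eq_zero (h1.U_ne_S i₂ ⟨0, N.Lpos i₂⟩ i₁ (N.L i₁) le_rfl),
          ind_eq_zero (hY2sL h1 hp hL hS2), ind_eq_one (hS0 h1 hp hL hS2)]
        ring
      have hm' : coA N k i₂ ⟨m, hm2⟩ (N.Y i₂) = - k ⟨i₂, ⟨m, hm2⟩, 0⟩ := by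
        unfold coA
        simp only [Fin.val_mk]
        rw [ind_eq_zero (fun h => h1.U_ne_Y i₂ ⟨m, hm2⟩ i₂ h),
          ind_eq_one rfl, ind_eq_zero (fun h => Y_ne_S hp i₂ m hm2.le h.symm)]
        ring
      rw [h0, hm']
      ring
    · intro j _ hj
      rw [E5c h1 hp hL hS2 k hm2, mul_zero, add_zero]
      have hcoA : coA N k i₂ j sL = 0 := by
        unfold coA
        rw [ind_eq_zero (h1.U_ne_S i₂ j i₁ (N.L i₁) le_rfl),
          ind_eq_zero (hY2sL h1 hp hL hS2),
          ind_eq_zero (hSmsL h1 hp hL hS2 j.2.le (fun h0 => hj (Fin.ext h0)))]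
        ring
      rw [hcoA, zero_mul]
    · exact fun h => absurd (Finset.mem_univ _) h
  · intro i _ hi
    refine Finset.sum_eq_zero fun j _ => ?_
    rw [E5c h1 hp hL hS2 k hm2, mul_zero, add_zero]
    by_cases hA : N.S i (j : ℕ) = sL
    · have hYne : N.Y i ≠ N.Y i₂ := fun h => hi (same_unique' h1 (j := (j : ℕ)) (j' := 0)
        j.2.le L0 h (hA.trans (hS0 h1 hp hL hS2).symm))
      rw [E5a h1 hp hL hS2 k hm2 _ _
          (fun h => hY2sL h1 hp hL hS2 (h.symm.trans hA))
          (fun h => hSmsL h1 hp hL hS2 hm2.le (by omega) (h.symm.trans hA)),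
        E5a h1 hp hL hS2 k hm2 _ _ hYne
          (fun h => X3' hp (i := i) (i' := i₂) (j := m) (j' := (j : ℕ)) (j'' := 0)
            hm2.le j.2.le L0 h (hA.trans (hS0 h1 hp hL hS2).symm)),
        if_pos hA]
      have hcf : coA N k i₂ ⟨m, hm2⟩ (N.Y i) = 0 := by
        unfold coA
        simp only [Fin.val_mk]
        rw [ind_eq_zero (fun h => h1.U_ne_Y i₂ ⟨m, hm2⟩ i h),
          ind_eq_zero (fun h => hYne h.symm),
          ind_eq_zero (fun h => X3' hp (i := i) (i' := i₂) (j := m) (j' := (j : ℕ)) (j'' := 0)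
            hm2.le j.2.le L0 h.symm (hA.trans (hS0 h1 hp hL hS2).symm))]
        ring
      have hYnsL : N.Y i ≠ sL := fun h =>
        X3' hp (i := i) (i' := i₂) (j := 0) (j' := (j : ℕ)) (j'' := 0) L0 j.2.le L0
          (h.trans (hS0 h1 hp hL hS2).symm) (hA.trans (hS0 h1 hp hL hS2).symm)
      rw [hcf, if_neg hYnsL, add_zero, mul_zero]
    · by_cases hB : N.Y i = sL
      · have hYS0 : N.Y i = N.S i₂ 0 := hB.trans (hS0 h1 hp hL hS2).symm
        rw [E5a h1 hp hL hS2 k hm2 _ _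
            (fun h => swap_false' h1 hp (j := (j : ℕ)) (j' := 0) j.2.le L0 hYS0 h)
            (fun h => X3' hp (i := i) (i' := i₂) (j := 0) (j' := (j : ℕ)) (j'' := m)
              L0 j.2.le hm2.le hYS0 h),
          E5a h1 hp hL hS2 k hm2 _ _
            (fun h => hY2sL h1 hp hL hS2 (h.symm.trans hB))
            (fun h => hSmsL h1 hp hL hS2 hm2.le (by omega) (h.symm.trans hB)),
          if_neg hA, if_pos hB, zero_add]
        have hcf : coA N k i₂ ⟨m, hm2⟩ (N.S i (j : ℕ)) = 0 := by
          unfold coA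
          simp only [Fin.val_mk]
          rw [ind_eq_zero (fun h => h1.U_ne_S i₂ ⟨m, hm2⟩ i (j : ℕ) j.2.le h),
            ind_eq_zero (fun h => swap_false' h1 hp (j := (j : ℕ)) (j' := 0) j.2.le L0
              hYS0 h.symm),
            ind_eq_zero (fun h => X3' hp (i := i) (i' := i₂) (j := 0) (j' := (j : ℕ)) (j'' := m)
              L0 j.2.le hm2.le hYS0 h.symm)]
          ring
        rw [hcf, mul_zero]
      · have hcoA : coA N k i j sL = 0 := by
          unfold coA
          rw [ind_eq_zero (h1.U_ne_S i j i₁ (N.L i₁) le_rfl),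
            ind_eq_zero hB, ind_eq_zero hA]
          ring
        rw [hcoA, zero_mul]
  · exact fun h => absurd (Finset.mem_univ _) h

end Aux6
/-- **Lemma.** Fix two connected components `i₁`, `i₂` of a network satisfying
Assumptions 1 and 2, the second running through the same substrates in reverse order
(`S i₂ j = S i₁ (L - j)`), so that the pair has the shape `Y+S₀ ⇄ U₁ → ⋯ → Y+S_L` and
`Ỹ+S_L ⇄ V_L → ⋯ → Ỹ+S₀`. The constants `ã_L, b̃_L, c̃_L` and `ã_j, K̃_j = b̃_j + c̃_j`
for `1 ≤ j ≤ L-1` can be identified from `ṡ_L` and `s̈_L` (two derivatives of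
`s_L = S i₁ (L i₁)` suffice). In the parametrization of the second component as an
Assumption-1 component, the tilde constants of paper index `j` are the constants of
block `L - j` (0-indexed): `ã_L, b̃_L, c̃_L` are those of block `0`, and for
`j = jj + 1`, `1 ≤ j ≤ L-1`, those of block `L - 1 - jj`. -/
theorem tilde_constants_identifiable
    (N : A1Network σ) (h1 : N.Assumption1) (h2 : N.Assumption2)
    (i₁ i₂ : N.ι) (hne : i₁ ≠ i₂) (hL : N.L i₂ = N.L i₁)
    (hS : ∀ j, j ≤ N.L i₁ → N.S i₂ j = N.S i₁ (N.L i₁ - j)) :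
    N.IdentifiableFrom
      (fun k =>
        (k ⟨i₂, ⟨0, by have := N.Lpos i₂; omega⟩, 0⟩,
         k ⟨i₂, ⟨0, by have := N.Lpos i₂; omega⟩, 1⟩,
         k ⟨i₂, ⟨0, by have := N.Lpos i₂; omega⟩, 2⟩,
         fun jj : Fin (N.L i₁ - 1) =>
           k ⟨i₂, ⟨N.L i₁ - 1 - (jj : ℕ), by have := jj.isLt; omega⟩, 0⟩,
         fun jj : Fin (N.L i₁ - 1) =>
           k ⟨i₂, ⟨N.L i₁ - 1 - (jj : ℕ), by have := jj.isLt; omega⟩, 1⟩ +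
             k ⟨i₂, ⟨N.L i₁ - 1 - (jj : ℕ), by have := jj.isLt; omega⟩, 2⟩))
      {N.S i₁ (N.L i₁)} 2 := by
  obtain ⟨part, hp⟩ := h2
  intro k₁ k₂ hk₁ hk₂ hder
  have hd1 : N.rhs k₁ (N.S i₁ (N.L i₁)) = N.rhs k₂ (N.S i₁ (N.L i₁)) := by
    have h := hder (N.S i₁ (N.L i₁)) rfl 1 le_rfl (by omega)
    rwa [deriv_one, deriv_one] at h
  have hd2 : N.deriv k₁ 2 (N.S i₁ (N.L i₁)) = N.deriv k₂ 2 (N.S i₁ (N.L i₁)) :=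
    hder (N.S i₁ (N.L i₁)) rfl 2 (by omega) le_rfl
  have haL : k₁ ⟨i₂, ⟨0, by have := N.Lpos i₂; omega⟩, 0⟩ =
      k₂ ⟨i₂, ⟨0, by have := N.Lpos i₂; omega⟩, 0⟩ := by
    have h := congrArg (coeff (single (N.Y i₂) 1 + single (N.S i₁ (N.L i₁)) 1)) hd1
    rw [E1 h1 hp hL hS k₁, E1 h1 hp hL hS k₂] at h
    exact neg_injective h
  have hbL : k₁ ⟨i₂, ⟨0, by have := N.Lpos i₂; omega⟩, 1⟩ =
      k₂ ⟨i₂, ⟨0, by have := N.Lpos i₂; omega⟩, 1⟩ := by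
    have h := congrArg (coeff (single (N.U i₂ (0 + 1)) 1)) hd1
    rwa [E2 h1 hp hL hS k₁, E2 h1 hp hL hS k₂] at h
  have hcL : k₁ ⟨i₂, ⟨0, by have := N.Lpos i₂; omega⟩, 2⟩ =
      k₂ ⟨i₂, ⟨0, by have := N.Lpos i₂; omega⟩, 2⟩ := by
    have h := congrArg (coeff (single (N.U i₂ (0 + 1)) 1)) hd2
    rw [E3 h1 hp hL hS k₁, E3 h1 hp hL hS k₂] at h
    rw [hbL] at h
    have hb0 : k₂ ⟨i₂, ⟨0, by have := N.Lpos i₂; omega⟩, 1⟩ ≠ 0 :=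
      ne_of_gt (hk₂ _)
    have h' : k₂ ⟨i₂, ⟨0, by have := N.Lpos i₂; omega⟩, 1⟩ *
        k₁ ⟨i₂, ⟨0, by have := N.Lpos i₂; omega⟩, 2⟩ =
        k₂ ⟨i₂, ⟨0, by have := N.Lpos i₂; omega⟩, 1⟩ *
        k₂ ⟨i₂, ⟨0, by have := N.Lpos i₂; omega⟩, 2⟩ := by
      linear_combination -h
    exact mul_left_cancel₀ hb0 h'
  have ha0 : (0:ℝ) < k₂ ⟨i₂, ⟨0, by have := N.Lpos i₂; omega⟩, 0⟩ := hk₂ _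
  have ham : ∀ (m : ℕ) (hm1 : 1 ≤ m) (hm2 : m < N.L i₂),
      k₁ ⟨i₂, ⟨m, hm2⟩, 0⟩ = k₂ ⟨i₂, ⟨m, hm2⟩, 0⟩ := by
    intro m hm1 hm2
    have h := congrArg
      (coeff (single (N.Y i₂) 1 + single (N.S i₂ m) 1 + single (N.S i₁ (N.L i₁)) 1)) hd2
    rw [E5 h1 hp hL hS k₁ hm1 hm2, E5 h1 hp hL hS k₂ hm1 hm2, haL] at h
    exact mul_left_cancel₀ (ne_of_gt ha0) h
  have hKm : ∀ (m : ℕ) (hm1 : 1 ≤ m) (hm2 : m < N.L i₂),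
      k₁ ⟨i₂, ⟨m, hm2⟩, 1⟩ + k₁ ⟨i₂, ⟨m, hm2⟩, 2⟩ =
        k₂ ⟨i₂, ⟨m, hm2⟩, 1⟩ + k₂ ⟨i₂, ⟨m, hm2⟩, 2⟩ := by
    intro m hm1 hm2
    have h := congrArg
      (coeff (single (N.U i₂ (m + 1)) 1 + single (N.S i₁ (N.L i₁)) 1)) hd2
    rw [E4 h1 hp hL hS k₁ hm1 hm2, E4 h1 hp hL hS k₂ hm1 hm2, haL] at h
    have h' : -(k₂ ⟨i₂, ⟨0, by have := N.Lpos i₂; omega⟩, 0⟩) *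
        (k₁ ⟨i₂, ⟨m, hm2⟩, 1⟩ + k₁ ⟨i₂, ⟨m, hm2⟩, 2⟩) =
        -(k₂ ⟨i₂, ⟨0, by have := N.Lpos i₂; omega⟩, 0⟩) *
        (k₂ ⟨i₂, ⟨m, hm2⟩, 1⟩ + k₂ ⟨i₂, ⟨m, hm2⟩, 2⟩) := by
      linear_combination h
    exact mul_left_cancel₀ (neg_ne_zero.2 (ne_of_gt ha0)) h'
  have hL1 := N.Lpos i₁
  simp only [Prod.mk.injEq]
  refine ⟨haL, hbL, hcL, funext fun jj => ?_, funext fun jj => ?_⟩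
  · exact ham (N.L i₁ - 1 - (jj : ℕ)) (by have := jj.isLt; omega)
      (by have := jj.isLt; omega)
  · exact hKm (N.L i₁ - 1 - (jj : ℕ)) (by have := jj.isLt; omega)
      (by have := jj.isLt; omega)

end A1Network
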